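/- Let U ⊆ S^m_d be a quasi-stable monomial module and G a P(U)-marked set. Then G is a P(U)-marked basis if and only if for every f_α^k ∈ G and every nonmultiplicative variable x_i of x^α, the element x_i f_α^k reduces to 0 under the reduction relation →_G. -/

import Mathlib

open MvPolynomial

namespace MB

/-- Exponent (multi-index) of a term in the variables `x_0, …, x_n`. -/
abbrev Exp (n : ℕ) := Fin (n+1) →₀ ℕ

variable {n : ℕ}

/-- Total degree of a term. -/
def degE (α : Exp n) : ℕ := α.sum fun _ e => e

/-- `x_i` is a multiplicative variable for the term `x^α`, i.e. `x_i ≤ min(x^α)`. -/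
def mult (α : Exp n) (i : Fin (n+1)) : Prop := ∀ j ∈ α.support, i ≤ j

/-- Every variable occurring in `x^δ` is multiplicative for `x^α`. -/
def multExp (α δ : Exp n) : Prop := ∀ i ∈ δ.support, mult α i

/-- Pommaret cone of a term. -/
def pommaretCone (α : Exp n) : Set (Exp n) := {γ | ∃ δ, multExp α δ ∧ γ = α + δ}

/-- A set of terms is (the set of terms of) a monomial ideal. -/
def IsMonomialIdeal (T : Set (Exp n)) : Prop := ∀ α ∈ T, ∀ β, α + β ∈ T

/-- `P` is a Pommaret basis of the set of terms `T`: the terms of `T` are the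
disjoint union of the Pommaret cones of the elements of `P`. -/
def IsPommaretBasis (P : Finset (Exp n)) (T : Set (Exp n)) : Prop :=
  (∀ γ, γ ∈ T ↔ ∃ α ∈ P, γ ∈ pommaretCone α) ∧
  ∀ γ : Exp n, ∀ α ∈ P, ∀ β ∈ P, γ ∈ pommaretCone α → γ ∈ pommaretCone β → α = β

/-- Lexicographic order on terms (with `x_n > … > x_0` significance). -/
def lexLt (η δ : Exp n) : Prop := ∃ i, η i < δ i ∧ ∀ j, i < j → η j = δ j

/-- Terms of the saturation `(J : (x_0,…,x_n)^∞)` of a monomial ideal. -/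
def satTerms (T : Set (Exp n)) : Set (Exp n) :=
  {α | ∃ j : ℕ, ∀ β : Exp n, degE β = j → α + β ∈ T}

section ModuleDefs

variable (A : Type*) [CommRing A] {κ : Type*} [Fintype κ] [DecidableEq κ]

/-- The term `x^α e_k` of the free module. -/
noncomputable def termV (α : Exp n) (k : κ) : κ → MvPolynomial (Fin (n+1)) A :=
  Pi.single k (monomial α 1)

variable {A}

/-- Homogeneity of degree `s` in `S^m_d` (with weight vector `d`). -/
def IsHomogV (d : κ → ℤ) (f : κ → MvPolynomial (Fin (n+1)) A) (s : ℤ) : Prop :=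
  ∀ k, ∀ β ∈ (f k).support, (degE β : ℤ) + d k = s

variable (A)

/-- The degree-`s` component `(S^m_d)_s` as an `A`-submodule. -/
noncomputable def homogCompV (d : κ → ℤ) (s : ℤ) :
    Submodule A (κ → MvPolynomial (Fin (n+1)) A) where
  carrier := {f | IsHomogV d f s}
  add_mem' := by
    intro f g hf hg k β hβ
    rcases Finset.mem_union.mp (MvPolynomial.support_add hβ) with h | h
    · exact hf k β h
    · exact hg k β h
  zero_mem' := by intro k β hβ; simp at hβ
  smul_mem' := by
    intro a f hf k β hβ
    exact hf k β (MvPolynomial.support_smul hβ)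

/-- The set `N(U)` of terms of `S^m_d` not belonging to the monomial module `U = ⊕ J^(k) e_k`. -/
def NUTerms (J : κ → Set (Exp n)) : Set (κ → MvPolynomial (Fin (n+1)) A) :=
  {v | ∃ k, ∃ α, α ∉ J k ∧ v = termV A α k}

/-- The degree-`s` part `N(U)_s`. -/
def NUTermsDeg (d : κ → ℤ) (J : κ → Set (Exp n)) (s : ℤ) :
    Set (κ → MvPolynomial (Fin (n+1)) A) :=
  {v | ∃ k, ∃ α, α ∉ J k ∧ (degE α : ℤ) + d k = s ∧ v = termV A α k}

variable {A}

/-- A `P(U)`-marked set: for each `x^α e_k` with `α ∈ P k`, the element `g α k` has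
head term `x^α e_k` (coefficient `1`) and all other terms in `N(U)` of the same degree. -/
def IsMarkedSetV (d : κ → ℤ) (J : κ → Set (Exp n)) (P : κ → Finset (Exp n))
    (g : Exp n → κ → (κ → MvPolynomial (Fin (n+1)) A)) : Prop :=
  ∀ k, ∀ α ∈ P k, ∀ l, ∀ β ∈ ((g α k - termV A α k) l).support,
    β ∉ J l ∧ (degE β : ℤ) + d l = (degE α : ℤ) + d k

/-- The underlying set of elements of the marked set `G`. -/
def GSet (P : κ → Finset (Exp n)) (g : Exp n → κ → (κ → MvPolynomial (Fin (n+1)) A)) :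
    Set (κ → MvPolynomial (Fin (n+1)) A) :=
  {v | ∃ k, ∃ α ∈ P k, v = g α k}

/-- The set `G^(s)` of multiplicative multiples of elements of `G` of degree `s`. -/
def GSdeg (d : κ → ℤ) (P : κ → Finset (Exp n))
    (g : Exp n → κ → (κ → MvPolynomial (Fin (n+1)) A)) (s : ℤ) :
    Set (κ → MvPolynomial (Fin (n+1)) A) :=
  {v | ∃ k, ∃ α ∈ P k, ∃ δ : Exp n, multExp α δ ∧
    (degE δ : ℤ) + (degE α : ℤ) + d k = s ∧ v = (monomial δ (1:A)) • g α k}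

/-- The `S`-submodule `⟨G⟩` generated by the marked set. -/
noncomputable def GmodS (P : κ → Finset (Exp n))
    (g : Exp n → κ → (κ → MvPolynomial (Fin (n+1)) A)) :
    Submodule (MvPolynomial (Fin (n+1)) A) (κ → MvPolynomial (Fin (n+1)) A) :=
  Submodule.span _ (GSet P g)

/-- The degree-`s` component `⟨G⟩_s` as an `A`-submodule. -/
noncomputable def GmodDeg (d : κ → ℤ) (P : κ → Finset (Exp n))
    (g : Exp n → κ → (κ → MvPolynomial (Fin (n+1)) A)) (s : ℤ) :
    Submodule A (κ → MvPolynomial (Fin (n+1)) A) :=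
  (GmodS P g).restrictScalars A ⊓ homogCompV A d s

/-- `G` is a marked basis: `(S^m_d)_s = ⟨G⟩_s ⊕ ⟨N(U)_s⟩^A` for every degree `s`. -/
def MarkedBasisProp (d : κ → ℤ) (J : κ → Set (Exp n)) (P : κ → Finset (Exp n))
    (g : Exp n → κ → (κ → MvPolynomial (Fin (n+1)) A)) : Prop :=
  ∀ s : ℤ,
    homogCompV A d s = GmodDeg d P g s ⊔ Submodule.span A (NUTermsDeg A d J s) ∧
    GmodDeg d P g s ⊓ Submodule.span A (NUTermsDeg A d J s) = ⊥

/-- One step of the reduction relation `→_G`. -/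
def RedStep (P : κ → Finset (Exp n)) (g : Exp n → κ → (κ → MvPolynomial (Fin (n+1)) A))
    (h h' : κ → MvPolynomial (Fin (n+1)) A) : Prop :=
  ∃ k, ∃ α ∈ P k, ∃ η : Exp n, multExp α η ∧
    (h k).coeff (η + α) ≠ 0 ∧
    h' = h - ((h k).coeff (η + α)) • ((monomial η (1:A)) • g α k)

end ModuleDefs

section IdealDefs

variable {A : Type*} [CommRing A]

/-- A `P(J)`-marked set of polynomials. -/
def IsMarkedSetI (T : Set (Exp n)) (P : Finset (Exp n))
    (g : Exp n → MvPolynomial (Fin (n+1)) A) : Prop :=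
  ∀ α ∈ P, ∀ β ∈ (g α - monomial α (1:A)).support, β ∉ T ∧ degE β = degE α

variable (A)

/-- The degree-`s` monomials not in `T`. -/
def NTermsDegI (T : Set (Exp n)) (s : ℕ) : Set (MvPolynomial (Fin (n+1)) A) :=
  {p | ∃ β, β ∉ T ∧ degE β = s ∧ p = monomial β (1:A)}

variable {A}

/-- Degree-`s` part of the ideal generated by the marked set. -/
noncomputable def IdealDegI (P : Finset (Exp n)) (g : Exp n → MvPolynomial (Fin (n+1)) A)
    (s : ℕ) : Submodule A (MvPolynomial (Fin (n+1)) A) :=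
  (Ideal.span (g '' ↑P)).restrictScalars A ⊓ homogeneousSubmodule (Fin (n+1)) A s

/-- A `P(J)`-marked basis of polynomials: `S_s = (G)_s ⊕ ⟨N(J)_s⟩^A` for all `s`. -/
def IsMarkedBasisI (T : Set (Exp n)) (P : Finset (Exp n))
    (g : Exp n → MvPolynomial (Fin (n+1)) A) : Prop :=
  IsMarkedSetI T P g ∧ ∀ s : ℕ,
    homogeneousSubmodule (Fin (n+1)) A s
      = IdealDegI P g s ⊔ Submodule.span A (NTermsDegI A T s) ∧
    IdealDegI P g s ⊓ Submodule.span A (NTermsDegI A T s) = ⊥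

/-- The polynomial `p` involves only multiplicative variables of `x^α`. -/
def multPoly (α : Exp n) (p : MvPolynomial (Fin (n+1)) A) : Prop :=
  ∀ β ∈ p.support, multExp α β

end IdealDefs

section SyzDefs

variable {A : Type*} [CommRing A]

/-- The map `(c_l) ↦ Σ_l c_l f_{α(l)}` whose kernel is `Syz(G)`. -/
noncomputable def syzMap (P : Finset (Exp n)) (g : Exp n → MvPolynomial (Fin (n+1)) A) :
    (↥P → MvPolynomial (Fin (n+1)) A) →ₗ[MvPolynomial (Fin (n+1)) A]
      MvPolynomial (Fin (n+1)) A where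
  toFun c := ∑ l : ↥P, c l * g l.1
  map_add' c c' := by simp [add_mul, Finset.sum_add_distrib]
  map_smul' a c := by simp [Finset.mul_sum, mul_assoc]

/-- Weight vector for the syzygy module: `d_l = deg x^{α(l)}`. -/
def ddeg (P : Finset (Exp n)) : ↥P → ℤ := fun l => (degE l.1 : ℤ)

/-- Terms of the monomial ideal generated by the nonmultiplicative variables of `x^{α(l)}`. -/
def Jsyz (P : Finset (Exp n)) : ↥P → Set (Exp n) :=
  fun l => {β | ∃ i ∈ β.support, ¬ mult (l : Exp n) i}

open Classical in
/-- The claimed Pommaret basis `{x_i e_l : x_i nonmultiplicative for x^{α(l)}}`. -/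
noncomputable def Psyz (P : Finset (Exp n)) : ↥P → Finset (Exp n) := fun l =>
  (Finset.univ.filter fun i : Fin (n+1) => ¬ mult (l : Exp n) i).image
    fun i => Finsupp.single i 1

open Classical in
/-- The syzygy `S_{k;i} = x_i e_k − Σ_l P_l^{k;i} e_l`. -/
noncomputable def Ssyz (P : Finset (Exp n))
    (Pc : ↥P → Fin (n+1) → ↥P → MvPolynomial (Fin (n+1)) A)
    (k : ↥P) (i : Fin (n+1)) : ↥P → MvPolynomial (Fin (n+1)) A :=
  fun l => (if l = k then (X i : MvPolynomial (Fin (n+1)) A) else 0) - Pc k i l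

/-- The set `G_Syz^(s)`. -/
def GSyzDeg (P : Finset (Exp n))
    (Pc : ↥P → Fin (n+1) → ↥P → MvPolynomial (Fin (n+1)) A) (s : ℤ) :
    Set (↥P → MvPolynomial (Fin (n+1)) A) :=
  {v | ∃ k : ↥P, ∃ i : Fin (n+1), ¬ mult (k : Exp n) i ∧ ∃ δ : Exp n,
    (∀ j ∈ δ.support, j ≤ i) ∧ (degE δ : ℤ) + 1 + ddeg P k = s ∧
    v = (monomial δ (1:A)) • Ssyz P Pc k i}

end SyzDefs

set_option linter.unusedSectionVars false

section LexAux

variable {n : ℕ}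

theorem degE_add (a b : Exp n) : degE (a + b) = degE a + degE b := by
  classical
  exact Finsupp.sum_add_index' (fun _ => rfl) (fun _ _ _ => rfl)

theorem lexLt_irrefl (a : Exp n) : ¬ lexLt a a := by
  rintro ⟨i, hi, -⟩; exact lt_irrefl _ hi

theorem lexLt_wf : WellFounded (lexLt (n := n)) := by
  have htri : IsTrichotomous (Fin (n+1)) (fun x y : Fin (n+1) => y < x) :=
    ⟨fun a b => by rcases lt_trichotomy a b with h|h|h
                   · exact fun _ h2 => absurd h h2
                   · exact fun _ _ => h
                   · exact fun h1 _ => absurd h h1⟩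
  have hwf : WellFounded (Finsupp.Lex (fun x y : Fin (n+1) => y < x) ((· < ·) : ℕ → ℕ → Prop)) := by
    refine @Finsupp.Lex.wellFounded' (Fin (n+1)) ℕ _ _ _ (fun m h => Nat.not_lt_zero _ h)
      wellFounded_lt htri ?_
    exact wellFounded_lt
  refine Subrelation.wf ?_ hwf
  rintro a b ⟨i, hi, hj⟩
  exact ⟨i, fun d hd => hj d hd, hi⟩

theorem lexLt_trichot (a b : Exp n) : lexLt a b ∨ a = b ∨ lexLt b a := by
  classical
  by_cases hab : a = b
  · exact Or.inr (Or.inl hab)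
  · have hne : ∃ i, a i ≠ b i := by
      by_contra h
      push_neg at h
      exact hab (Finsupp.ext h)
    set D : Finset (Fin (n+1)) := (a.support ∪ b.support).filter (fun i => a i ≠ b i) with hD
    have hDne : D.Nonempty := by
      obtain ⟨i, hi⟩ := hne
      refine ⟨i, ?_⟩
      simp only [hD, Finset.mem_filter, Finset.mem_union, Finsupp.mem_support_iff]
      refine ⟨?_, hi⟩
      by_contra h
      push_neg at h
      exact hi (h.1.trans h.2.symm)
    set i₀ := D.max' hDne with hi₀
    have hmem : i₀ ∈ D := D.max'_mem hDne
    have hne₀ : a i₀ ≠ b i₀ := (Finset.mem_filter.mp hmem).2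
    have heq : ∀ j, i₀ < j → a j = b j := by
      intro j hj
      by_contra h
      have : j ∈ D := by
        simp only [hD, Finset.mem_filter, Finset.mem_union, Finsupp.mem_support_iff]
        refine ⟨?_, h⟩
        by_contra h'
        push_neg at h'
        exact h (h'.1.trans h'.2.symm)
      exact absurd (D.le_max' j this) (not_le.mpr hj)
    rcases lt_or_gt_of_ne hne₀ with h | h
    · exact Or.inl ⟨i₀, h, heq⟩
    · exact Or.inr (Or.inr ⟨i₀, h, fun j hj => (heq j hj).symm⟩)

theorem lexLt_trans {a b c : Exp n} (h1 : lexLt a b) (h2 : lexLt b c) : lexLt a c := by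
  obtain ⟨i, hi, hia⟩ := h1
  obtain ⟨i', hi', hia'⟩ := h2
  rcases lt_trichotomy i i' with h | h | h
  · refine ⟨i', ?_, fun j hj => (hia j (h.trans hj)).trans (hia' j hj)⟩
    rw [hia i' h]; exact hi'
  · subst h
    exact ⟨i, hi.trans hi', fun j hj => (hia j hj).trans (hia' j hj)⟩
  · refine ⟨i, ?_, fun j hj => (hia j hj).trans (hia' j (h.trans hj))⟩
    rw [← hia' i h]; exact hi

theorem lexLt_add_left {a b : Exp n} (c : Exp n) (h : lexLt a b) : lexLt (c + a) (c + b) := by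
  obtain ⟨i, hi, hj⟩ := h
  refine ⟨i, ?_, fun j hjj => ?_⟩ <;> simp only [Finsupp.add_apply]
  · omega
  · rw [hj j hjj]

theorem exists_lex_max {X : Type*} (s : Finset X) (hs : s.Nonempty) (f : X → Exp n) :
    ∃ t ∈ s, ∀ t' ∈ s, f t' = f t ∨ lexLt (f t') (f t) := by
  classical
  induction s using Finset.induction with
  | empty => exact absurd hs (by simp)
  | @insert a s ha ih =>
    by_cases hse : s.Nonempty
    · obtain ⟨t, hts, hmax⟩ := ih hse
      rcases lexLt_trichot (f a) (f t) with h | h | h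
      · refine ⟨t, Finset.mem_insert_of_mem hts, ?_⟩
        intro t' ht'
        rcases Finset.mem_insert.mp ht' with rfl | ht'
        · exact Or.inr h
        · exact hmax t' ht'
      · refine ⟨t, Finset.mem_insert_of_mem hts, ?_⟩
        intro t' ht'
        rcases Finset.mem_insert.mp ht' with rfl | ht'
        · exact Or.inl h
        · exact hmax t' ht'
      · refine ⟨a, Finset.mem_insert_self _ _, ?_⟩
        intro t' ht'
        rcases Finset.mem_insert.mp ht' with rfl | ht'
        · exact Or.inl rfl
        · rcases hmax t' ht' with h' | h'
          · exact Or.inr (h' ▸ h)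
          · exact Or.inr (lexLt_trans h' h)
    · rw [Finset.not_nonempty_iff_eq_empty] at hse
      subst hse
      refine ⟨a, Finset.mem_insert_self _ _, ?_⟩
      intro t' ht'
      simp only [Finset.mem_insert, Finset.notMem_empty, or_false] at ht'
      subst ht'
      exact Or.inl rfl

end LexAux

section PommaretAux

variable {n : ℕ} {κ : Type*} [Fintype κ] [DecidableEq κ]
variable {J : κ → Set (Exp n)} {P : κ → Finset (Exp n)}

theorem multExp_zero (α : Exp n) : multExp α 0 := by intro i hi; simp at hi

theorem mem_J_of_mem_P (hQS : ∀ k, IsMonomialIdeal (J k) ∧ IsPommaretBasis (P k) (J k))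
    {k : κ} {α : Exp n} (hα : α ∈ P k) : α ∈ J k :=
  ((hQS k).2.1 α).mpr ⟨α, hα, 0, multExp_zero α, (add_zero α).symm⟩

theorem cone_mem_J (hQS : ∀ k, IsMonomialIdeal (J k) ∧ IsPommaretBasis (P k) (J k))
    {k : κ} {α : Exp n} (hα : α ∈ P k) {η : Exp n} (hη : multExp α η) : η + α ∈ J k :=
  ((hQS k).2.1 _).mpr ⟨α, hα, η, hη, add_comm η α⟩

theorem exists_dec (hQS : ∀ k, IsMonomialIdeal (J k) ∧ IsPommaretBasis (P k) (J k))
    {k : κ} {γ : Exp n} (h : γ ∈ J k) :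
    ∃ p : Exp n × Exp n, p.2 ∈ P k ∧ multExp p.2 p.1 ∧ γ = p.1 + p.2 := by
  obtain ⟨α, hα, δ, hδ, hγ⟩ := ((hQS k).2.1 γ).mp h
  exact ⟨(δ, α), hα, hδ, hγ.trans (add_comm α δ)⟩

theorem dec_unique (hQS : ∀ k, IsMonomialIdeal (J k) ∧ IsPommaretBasis (P k) (J k))
    {k : κ} {α β η μ : Exp n} (hα : α ∈ P k) (hβ : β ∈ P k)
    (hη : multExp α η) (hμ : multExp β μ) (e : η + α = μ + β) : α = β ∧ η = μ := by
  have hhd : α = β := by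
    refine (hQS k).2.2 (η + α) α hα β hβ ⟨η, hη, add_comm η α⟩ ?_
    exact ⟨μ, hμ, e.trans (add_comm μ β)⟩
  subst hhd
  refine ⟨rfl, ?_⟩
  exact add_right_cancel e

open Classical in
/-- Canonical Pommaret decomposition `(multiplier, head)` of a term. -/
noncomputable def decE (P : κ → Finset (Exp n)) (k : κ) (γ : Exp n) : Exp n × Exp n :=
  if h : ∃ p : Exp n × Exp n, p.2 ∈ P k ∧ multExp p.2 p.1 ∧ γ = p.1 + p.2 then h.choose
  else (0, 0)

theorem decE_spec (hQS : ∀ k, IsMonomialIdeal (J k) ∧ IsPommaretBasis (P k) (J k))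
    {k : κ} {γ : Exp n} (h : γ ∈ J k) :
    (decE P k γ).2 ∈ P k ∧ multExp (decE P k γ).2 (decE P k γ).1 ∧
      γ = (decE P k γ).1 + (decE P k γ).2 := by
  classical
  have hex := exists_dec hQS h
  rw [decE, dif_pos hex]
  exact hex.choose_spec

theorem decE_eq (hQS : ∀ k, IsMonomialIdeal (J k) ∧ IsPommaretBasis (P k) (J k))
    {k : κ} {γ α η : Exp n} (hα : α ∈ P k) (hη : multExp α η) (e : γ = η + α) :
    decE P k γ = (η, α) := by
  have hJ : γ ∈ J k := e ▸ cone_mem_J hQS hα hη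
  obtain ⟨h1, h2, h3⟩ := decE_spec hQS hJ
  obtain ⟨hhd, hml⟩ := dec_unique hQS h1 hα h2 hη (h3.symm.trans e)
  exact Prod.ext hml hhd

theorem cone_of_lexLt {α η η' β : Exp n} (hη : multExp α η) (e : η' + β = η + α)
    (hlt : lexLt η' η) : ∃ δ, multExp α δ ∧ β = α + δ := by
  obtain ⟨i, hi, hj⟩ := hlt
  have hmult : mult α i := hη i (Finsupp.mem_support_iff.mpr (by omega))
  have hpt : ∀ j, η' j + β j = η j + α j := fun j => by
    have := congrArg (fun x => x j) e
    simpa [Finsupp.add_apply] using this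
  have hβα : ∀ j, α j ≤ β j := by
    intro j
    rcases lt_trichotomy j i with hj' | rfl | hj'
    · have hz : α j = 0 := by
        by_contra hz
        exact absurd (hmult j (Finsupp.mem_support_iff.mpr hz)) (not_le.mpr hj')
      omega
    · have := hpt j; omega
    · have h1 := hpt j; have h2 := hj j hj'; omega
  refine ⟨β - α, ?_, ?_⟩
  · intro j hjs
    have hjle : j ≤ i := by
      by_contra hgt
      push_neg at hgt
      have h1 := hpt j; have h2 := hj j hgt
      have h3 : β j - α j = 0 := by omega
      simp [Finsupp.mem_support_iff, Finsupp.tsub_apply, h3] at hjs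
    intro j' hj'
    exact hjle.trans (hmult j' hj')
  · ext j
    have := hβα j
    simp only [Finsupp.add_apply, Finsupp.tsub_apply]
    omega

theorem multLt (hQS : ∀ k, IsMonomialIdeal (J k) ∧ IsPommaretBasis (P k) (J k))
    {k : κ} {β : Exp n} (hβ : β ∉ J k) {η' η α : Exp n} (hα : α ∈ P k)
    (hη : multExp α η) (e : η' + β = η + α) : lexLt η η' := by
  rcases lexLt_trichot η η' with h | h | h
  · exact h
  · exfalso
    subst h
    exact hβ (add_left_cancel e ▸ mem_J_of_mem_P hQS hα)
  · exfalso
    obtain ⟨δ, hδ, hb⟩ := cone_of_lexLt hη e h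
    exact hβ (((hQS k).2.1 β).mpr ⟨α, hα, δ, hδ, hb⟩)

theorem multLe (hQS : ∀ k, IsMonomialIdeal (J k) ∧ IsPommaretBasis (P k) (J k))
    {k : κ} {α₀ : Exp n} (hα₀ : α₀ ∈ P k) {μ η α : Exp n} (hα : α ∈ P k)
    (hη : multExp α η) (e : μ + α₀ = η + α) : η = μ ∨ lexLt η μ := by
  rcases lexLt_trichot η μ with h | h | h
  · exact Or.inr h
  · exact Or.inl h
  · exfalso
    obtain ⟨δ, hδ, hb⟩ := cone_of_lexLt hη e h
    have hhd : α = α₀ :=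
      (hQS k).2.2 α₀ α hα α₀ hα₀ ⟨δ, hδ, hb⟩ ⟨0, multExp_zero α₀, (add_zero α₀).symm⟩
    subst hhd
    have : μ = η := by
      have := e
      rwa [add_left_inj] at this
    subst this
    exact lexLt_irrefl _ h
end PommaretAux

section MarkedAux

variable {n : ℕ} {κ : Type*} [Fintype κ] [DecidableEq κ] {A : Type*} [CommRing A]
variable {d : κ → ℤ} {J : κ → Set (Exp n)} {P : κ → Finset (Exp n)}
variable {gb : Exp n → κ → (κ → MvPolynomial (Fin (n+1)) A)}

theorem termV_apply (α : Exp n) (k l : κ) :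
    termV A α k l = if l = k then monomial α (1:A) else 0 :=
  Pi.single_apply k _ l

theorem coeff_termV (α : Exp n) (k l : κ) (β : Exp n) :
    (termV A α k l).coeff β = if l = k ∧ β = α then 1 else 0 := by
  rw [termV_apply]
  by_cases hl : l = k
  · by_cases hb : β = α
    · simp [hl, hb, MvPolynomial.coeff_monomial]
    · simp [hl, hb, MvPolynomial.coeff_monomial, Ne.symm hb]
  · simp [hl]

theorem support_gb (hG : IsMarkedSetV d J P gb) {k : κ} {α : Exp n} (hα : α ∈ P k) (l : κ)
    {β : Exp n} (hβ : β ∈ (gb α k l).support) :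
    (l = k ∧ β = α) ∨ (β ∉ J l ∧ (degE β : ℤ) + d l = (degE α : ℤ) + d k) := by
  have he : gb α k l = (gb α k - termV A α k) l + termV A α k l := by simp
  rw [he] at hβ
  rcases Finset.mem_union.mp (MvPolynomial.support_add hβ) with h | h
  · exact Or.inr (hG k α hα l β h)
  · left
    have := MvPolynomial.mem_support_iff.mp h
    rw [coeff_termV] at this
    by_contra hc
    rw [if_neg] at this
    · exact this rfl
    · intro hh; exact hc hh

theorem gb_coeff_J (hG : IsMarkedSetV d J P gb) {k : κ} {α : Exp n} (hα : α ∈ P k)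
    {l : κ} {γ : Exp n} (hγ : γ ∈ J l) :
    (gb α k l).coeff γ = if l = k ∧ γ = α then 1 else 0 := by
  have he : (gb α k l).coeff γ = ((gb α k - termV A α k) l).coeff γ + (termV A α k l).coeff γ := by
    simp
  have h2 : ((gb α k - termV A α k) l).coeff γ = 0 := by
    by_contra h
    exact (hG k α hα l γ (MvPolynomial.mem_support_iff.mpr h)).1 hγ
  rw [he, h2, zero_add, coeff_termV]

theorem gb_homog (hG : IsMarkedSetV d J P gb) {k : κ} {α : Exp n} (hα : α ∈ P k) :
    IsHomogV d (gb α k) ((degE α : ℤ) + d k) := by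
  intro l β hβ
  rcases support_gb hG hα l hβ with ⟨rfl, rfl⟩ | ⟨-, h⟩
  · rfl
  · exact h

theorem termV_homog (α : Exp n) (k : κ) :
    IsHomogV d (termV A α k : κ → MvPolynomial (Fin (n+1)) A) ((degE α : ℤ) + d k) := by
  intro l β hβ
  have := MvPolynomial.mem_support_iff.mp hβ
  rw [coeff_termV] at this
  by_cases h : l = k ∧ β = α
  · rw [h.1, h.2]
  · rw [if_neg h] at this; exact absurd rfl this

theorem monSmul_apply (δ : Exp n) (c : A) (f : κ → MvPolynomial (Fin (n+1)) A) (l : κ) :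
    ((monomial δ c • f) l) = monomial δ c * f l := rfl

theorem coeff_monSmul (δ : Exp n) (f : κ → MvPolynomial (Fin (n+1)) A) (l : κ) (γ : Exp n) :
    ((monomial δ (1:A) • f) l).coeff γ = if δ ≤ γ then (f l).coeff (γ - δ) else 0 := by
  rw [monSmul_apply, mul_comm, MvPolynomial.coeff_mul_monomial']
  split_ifs <;> simp

theorem supp_monSmul {δ : Exp n} {f : κ → MvPolynomial (Fin (n+1)) A} {l : κ} {γ : Exp n}
    (h : γ ∈ ((monomial δ (1:A) • f) l).support) : ∃ β ∈ (f l).support, γ = δ + β := by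
  have hc := MvPolynomial.mem_support_iff.mp h
  rw [coeff_monSmul] at hc
  by_cases hle : δ ≤ γ
  · rw [if_pos hle] at hc
    refine ⟨γ - δ, MvPolynomial.mem_support_iff.mpr hc, ?_⟩
    rw [add_comm, tsub_add_cancel_of_le hle]
  · rw [if_neg hle] at hc; exact absurd rfl hc

theorem monSmul_homog {δ : Exp n} {s : ℤ} {f : κ → MvPolynomial (Fin (n+1)) A}
    (hf : IsHomogV d f s) : IsHomogV d (monomial δ (1:A) • f) ((degE δ : ℤ) + s) := by
  intro l β hβ
  obtain ⟨β', hβ', rfl⟩ := supp_monSmul hβ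
  have := hf l β' hβ'
  rw [degE_add]
  push_cast
  linarith

theorem monSmul_termV (δ α : Exp n) (k : κ) :
    monomial δ (1:A) • (termV A α k : κ → MvPolynomial (Fin (n+1)) A) = termV A (δ + α) k := by
  funext l
  rw [monSmul_apply, termV_apply, termV_apply]
  split_ifs
  · rw [MvPolynomial.monomial_mul, one_mul]
  · rw [mul_zero]

theorem monSmul_monSmul (δ η : Exp n) (f : κ → MvPolynomial (Fin (n+1)) A) :
    monomial δ (1:A) • (monomial η (1:A) • f) = monomial (δ + η) (1:A) • f := by
  funext l
  simp only [monSmul_apply, ← mul_assoc, MvPolynomial.monomial_mul, one_mul]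

theorem expandV (f : κ → MvPolynomial (Fin (n+1)) A) :
    f = ∑ k : κ, ∑ γ ∈ (f k).support, (f k).coeff γ • (termV A γ k : κ → MvPolynomial (Fin (n+1)) A) := by
  funext l
  rw [Finset.sum_apply]
  rw [Finset.sum_eq_single l]
  · rw [Finset.sum_apply]
    have : ∀ γ ∈ (f l).support, ((f l).coeff γ • (termV A γ l : κ → MvPolynomial (Fin (n+1)) A)) l
        = monomial γ ((f l).coeff γ) := by
      intro γ _
      rw [Pi.smul_apply, termV_apply, if_pos rfl, MvPolynomial.smul_monomial, smul_eq_mul, mul_one]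
    rw [Finset.sum_congr rfl this, MvPolynomial.support_sum_monomial_coeff]
  · intro k _ hkl
    rw [Finset.sum_apply]
    refine Finset.sum_eq_zero fun γ _ => ?_
    rw [Pi.smul_apply, termV_apply, if_neg (Ne.symm hkl), smul_zero]
  · intro h
    exact absurd (Finset.mem_univ l) h

theorem mem_spanN {f : κ → MvPolynomial (Fin (n+1)) A} {s : ℤ} (hf : IsHomogV d f s)
    (hs : ∀ k γ, γ ∈ (f k).support → γ ∉ J k) :
    f ∈ Submodule.span A (NUTermsDeg A d J s) := by
  rw [expandV f]
  refine Submodule.sum_mem _ fun k _ => Submodule.sum_mem _ fun γ hγ => Submodule.smul_mem _ _ ?_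
  exact Submodule.subset_span ⟨k, γ, hs k γ hγ, hf k γ hγ, rfl⟩

theorem spanN_homog {s : ℤ} {f : κ → MvPolynomial (Fin (n+1)) A}
    (h : f ∈ Submodule.span A (NUTermsDeg A d J s)) : IsHomogV d f s := by
  have hle : Submodule.span A (NUTermsDeg A d J s) ≤ homogCompV A d s := by
    rw [Submodule.span_le]
    rintro v ⟨k, γ, hγ, hdeg, rfl⟩
    intro l β hβ
    have := MvPolynomial.mem_support_iff.mp hβ
    rw [coeff_termV] at this
    by_cases hc : l = k ∧ β = γ
    · rw [hc.1, hc.2]; exact hdeg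
    · rw [if_neg hc] at this; exact absurd rfl this
  exact hle h

theorem spanN_supp {s : ℤ} {f : κ → MvPolynomial (Fin (n+1)) A}
    (h : f ∈ Submodule.span A (NUTermsDeg A d J s)) :
    ∀ k γ, γ ∈ (f k).support → γ ∉ J k := by
  set Z : Submodule A (κ → MvPolynomial (Fin (n+1)) A) :=
    { carrier := {f | ∀ k γ, γ ∈ (f k).support → γ ∉ J k}
      add_mem' := by
        intro f g hf hg k γ hγ
        rcases Finset.mem_union.mp (MvPolynomial.support_add hγ) with h' | h'
        · exact hf k γ h'
        · exact hg k γ h'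
      zero_mem' := by intro k γ hγ; simp at hγ
      smul_mem' := by
        intro a f hf k γ hγ
        exact hf k γ (MvPolynomial.support_smul hγ) } with hZ
  have hle : Submodule.span A (NUTermsDeg A d J s) ≤ Z := by
    rw [Submodule.span_le]
    rintro v ⟨k, γ, hγ, -, rfl⟩
    intro l β hβ
    have := MvPolynomial.mem_support_iff.mp hβ
    rw [coeff_termV] at this
    by_cases hc : l = k ∧ β = γ
    · rw [hc.1, hc.2]; exact hγ
    · rw [if_neg hc] at this; exact absurd rfl this
  exact hle h

end MarkedAux

section SupAux

variable {n : ℕ} {κ : Type*} [Fintype κ] [DecidableEq κ] {A : Type*} [CommRing A]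
variable {d : κ → ℤ} {J : κ → Set (Exp n)} {P : κ → Finset (Exp n)}
variable {gb : Exp n → κ → (κ → MvPolynomial (Fin (n+1)) A)}

theorem gb_mem_GmodS {k : κ} {α : Exp n} (hα : α ∈ P k) : gb α k ∈ GmodS P gb :=
  Submodule.subset_span ⟨k, α, hα, rfl⟩

theorem termV_mem_sup (hQS : ∀ k, IsMonomialIdeal (J k) ∧ IsPommaretBasis (P k) (J k))
    (hG : IsMarkedSetV d J P gb) (k : κ) (γ : Exp n) :
    termV A γ k ∈ GmodDeg d P gb ((degE γ : ℤ) + d k) ⊔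
      Submodule.span A (NUTermsDeg A d J ((degE γ : ℤ) + d k)) := by
  have main : ∀ μ : Exp n, ∀ k (γ : Exp n), γ ∈ J k → (decE P k γ).1 = μ →
      termV A γ k ∈ GmodDeg d P gb ((degE γ : ℤ) + d k) ⊔
        Submodule.span A (NUTermsDeg A d J ((degE γ : ℤ) + d k)) := by
    intro μ
    refine lexLt_wf.induction
      (C := fun μ => ∀ k (γ : Exp n), γ ∈ J k → (decE P k γ).1 = μ →
        termV A γ k ∈ GmodDeg d P gb ((degE γ : ℤ) + d k) ⊔
          Submodule.span A (NUTermsDeg A d J ((degE γ : ℤ) + d k))) μ ?_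
    clear μ
    intro μ IH k γ hJ hdec
    obtain ⟨hα, hml, hγ⟩ := decE_spec hQS (P := P) hJ
    set η := (decE P k γ).1 with hη
    set α := (decE P k γ).2 with halpha
    set s : ℤ := (degE γ : ℤ) + d k with hs
    have hdegs : (degE η : ℤ) + ((degE α : ℤ) + d k) = s := by
      rw [hs, hγ, degE_add]; push_cast; ring
    have hid : (termV A γ k : κ → MvPolynomial (Fin (n+1)) A)
        = monomial η (1:A) • gb α k - monomial η (1:A) • (gb α k - termV A α k) := by
      rw [← smul_sub, sub_sub_cancel, monSmul_termV, ← hγ]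
    have h1 : monomial η (1:A) • gb α k ∈ GmodDeg d P gb s := by
      constructor
      · exact Submodule.smul_mem _ _ (gb_mem_GmodS hα)
      · have := monSmul_homog (δ := η) (gb_homog hG hα)
        rwa [hdegs] at this
    have h2 : monomial η (1:A) • (gb α k - termV A α k) ∈
        GmodDeg d P gb s ⊔ Submodule.span A (NUTermsDeg A d J s) := by
      set w := monomial η (1:A) • (gb α k - termV A α k) with hw
      rw [expandV w]
      refine Submodule.sum_mem _ fun l _ => Submodule.sum_mem _ fun β' hβ' =>
        Submodule.smul_mem _ _ ?_
      obtain ⟨β, hβ, rfl⟩ := supp_monSmul hβ'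
      obtain ⟨hβJ, hβdeg⟩ := hG k α hα l β hβ
      have hdegβ : (degE (η + β) : ℤ) + d l = s := by
        rw [degE_add]; push_cast; push_cast at hβdeg; linarith [hdegs]
      by_cases hJβ : η + β ∈ J l
      · obtain ⟨hπ, hι, hdecβ⟩ := decE_spec hQS (P := P) hJβ
        have hlt : lexLt (decE P l (η + β)).1 η :=
          multLt hQS hβJ hπ hι hdecβ
        have := IH (decE P l (η + β)).1 (hdec ▸ hlt) l (η + β) hJβ rfl
        rwa [hdegβ] at this
      · refine Submodule.mem_sup_right (Submodule.subset_span ?_)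
        exact ⟨l, η + β, hJβ, hdegβ, rfl⟩
    rw [hid]
    exact Submodule.sub_mem _ (Submodule.mem_sup_left h1) h2
  by_cases hJ : γ ∈ J k
  · exact main _ k γ hJ rfl
  · exact Submodule.mem_sup_right (Submodule.subset_span ⟨k, γ, hJ, rfl, rfl⟩)

theorem homog_eq_sup (hQS : ∀ k, IsMonomialIdeal (J k) ∧ IsPommaretBasis (P k) (J k))
    (hG : IsMarkedSetV d J P gb) (s : ℤ) :
    homogCompV A d s = GmodDeg d P gb s ⊔ Submodule.span A (NUTermsDeg A d J s) := by
  apply le_antisymm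
  · intro f hf
    rw [expandV f]
    refine Submodule.sum_mem _ fun k _ => Submodule.sum_mem _ fun γ hγ =>
      Submodule.smul_mem _ _ ?_
    have hdeg : (degE γ : ℤ) + d k = s := hf k γ hγ
    have := termV_mem_sup hQS hG k γ
    rwa [hdeg] at this
  · refine sup_le ?_ ?_
    · exact inf_le_right
    · intro f h
      exact spanN_homog h

end SupAux

section RedAux

variable {n : ℕ} {κ : Type*} [Fintype κ] [DecidableEq κ] {A : Type*} [CommRing A]
variable {d : κ → ℤ} {J : κ → Set (Exp n)} {P : κ → Finset (Exp n)}
variable {gb : Exp n → κ → (κ → MvPolynomial (Fin (n+1)) A)}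

open Classical in
/-- The set of "U-terms" of `h`: support terms lying in the module `U`. -/
noncomputable def UT (J : κ → Set (Exp n)) (h : κ → MvPolynomial (Fin (n+1)) A) :
    Finset (κ × Exp n) :=
  Finset.univ.biUnion fun k => ((h k).support.filter fun γ => γ ∈ J k).image fun γ => (k, γ)

theorem mem_UT {h : κ → MvPolynomial (Fin (n+1)) A} {t : κ × Exp n} :
    t ∈ UT J h ↔ t.2 ∈ (h t.1).support ∧ t.2 ∈ J t.1 := by
  classical
  constructor
  · intro ht
    obtain ⟨k, -, hk⟩ := Finset.mem_biUnion.mp ht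
    obtain ⟨γ, hγ, heq⟩ := Finset.mem_image.mp hk
    obtain ⟨h1, h2⟩ := Finset.mem_filter.mp hγ
    subst heq
    exact ⟨h1, h2⟩
  · intro ⟨h1, h2⟩
    refine Finset.mem_biUnion.mpr ⟨t.1, Finset.mem_univ _, Finset.mem_image.mpr ?_⟩
    exact ⟨t.2, Finset.mem_filter.mpr ⟨h1, h2⟩, rfl⟩

theorem redstep_homog (hG : IsMarkedSetV d J P gb) {s : ℤ}
    {h h' : κ → MvPolynomial (Fin (n+1)) A} (hs : IsHomogV d h s)
    (hr : RedStep P gb h h') : IsHomogV d h' s := by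
  obtain ⟨k, α, hα, η, hη, hc, rfl⟩ := hr
  have hhd : (degE (η + α) : ℤ) + d k = s :=
    hs k _ (MvPolynomial.mem_support_iff.mpr hc)
  have hg : IsHomogV d (monomial η (1:A) • gb α k) s := by
    have h2 := monSmul_homog (δ := η) (gb_homog hG hα)
    have h3 : (degE η : ℤ) + ((degE α : ℤ) + d k) = s := by
      rw [degE_add] at hhd; push_cast at hhd; linarith
    rwa [h3] at h2
  exact Submodule.sub_mem (homogCompV A d s) hs
    (Submodule.smul_mem (homogCompV A d s) _ hg)

theorem redstep_sub_mem {h h' : κ → MvPolynomial (Fin (n+1)) A} (hr : RedStep P gb h h') :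
    h - h' ∈ (GmodS P gb).restrictScalars A := by
  obtain ⟨k, α, hα, η, hη, hc, rfl⟩ := hr
  rw [sub_sub_cancel]
  refine Submodule.smul_mem _ _ ?_
  exact Submodule.smul_mem (GmodS P gb) _ (gb_mem_GmodS hα)

theorem rtg_homog (hG : IsMarkedSetV d J P gb) {s : ℤ}
    {h h' : κ → MvPolynomial (Fin (n+1)) A}
    (hchain : Relation.ReflTransGen (RedStep P gb) h h') (hs : IsHomogV d h s) :
    IsHomogV d h' s := by
  induction hchain with
  | refl => exact hs
  | tail _ step ih => exact redstep_homog hG ih step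

theorem rtg_sub_mem {h h' : κ → MvPolynomial (Fin (n+1)) A}
    (hchain : Relation.ReflTransGen (RedStep P gb) h h') :
    h - h' ∈ (GmodS P gb).restrictScalars A := by
  induction hchain with
  | refl => rw [sub_self]; exact Submodule.zero_mem _
  | @tail b c _ step ih =>
    have h2 := redstep_sub_mem step
    have : h - c = (h - b) + (b - c) := by ring
    rw [this]
    exact Submodule.add_mem _ ih h2

theorem step_at (hQS : ∀ k, IsMonomialIdeal (J k) ∧ IsPommaretBasis (P k) (J k))
    (hG : IsMarkedSetV d J P gb) {h : κ → MvPolynomial (Fin (n+1)) A} {k : κ} {γ : Exp n}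
    (hsup : γ ∈ (h k).support) (hγJ : γ ∈ J k) :
    ∃ h', RedStep P gb h h' ∧ γ ∉ (h' k).support ∧
      ∀ l γ', γ' ∈ (h' l).support → γ' ∈ J l →
        γ' ∈ (h l).support ∨ lexLt (decE P l γ').1 (decE P k γ).1 := by
  obtain ⟨hα, hml, hγeq⟩ := decE_spec hQS (P := P) hγJ
  set η := (decE P k γ).1 with hηd
  set α := (decE P k γ).2 with hαd
  set c := (h k).coeff γ with hcd
  set v : κ → MvPolynomial (Fin (n+1)) A := monomial η (1:A) • gb α k with hvd
  refine ⟨h - c • v, ?_, ?_, ?_⟩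
  · refine ⟨k, α, hα, η, hml, ?_, ?_⟩
    · rw [← hγeq]
      exact MvPolynomial.mem_support_iff.mp hsup
    · rw [← hγeq]
  · have hvc : (v k).coeff γ = 1 := by
      rw [hvd, coeff_monSmul, if_pos (by rw [hγeq]; exact le_self_add),
        hγeq, add_tsub_cancel_left, gb_coeff_J hG hα (mem_J_of_mem_P hQS hα),
        if_pos ⟨rfl, rfl⟩]
    simp only [MvPolynomial.mem_support_iff, not_not, Pi.sub_apply, Pi.smul_apply,
      MvPolynomial.coeff_sub, MvPolynomial.coeff_smul, hvc, smul_eq_mul, mul_one]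
    rw [← hcd]; ring
  · intro l γ' hγ's hγ'J
    by_cases hold : γ' ∈ (h l).support
    · exact Or.inl hold
    · right
      have hv : γ' ∈ (v l).support := by
        rw [MvPolynomial.mem_support_iff]
        intro hz
        have h0 : ((h - c • v) l).coeff γ' = 0 := by
          simp only [Pi.sub_apply, Pi.smul_apply, MvPolynomial.coeff_sub,
            MvPolynomial.coeff_smul, hz, smul_eq_mul, mul_zero, sub_zero]
          exact MvPolynomial.notMem_support_iff.mp hold
        exact (MvPolynomial.mem_support_iff.mp hγ's) h0
      obtain ⟨β, hβ, rfl⟩ := supp_monSmul hv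
      rcases support_gb hG hα l hβ with ⟨rfl, rfl⟩ | ⟨hβJ, -⟩
      · -- head case: γ' = γ, contradiction with hold since γ ∈ supp h k
        rw [← hγeq] at hγ's ⊢
        exact absurd (hγeq ▸ hsup) hold
      · obtain ⟨hπ, hι, hde⟩ := decE_spec hQS (P := P) hγ'J
        exact multLt hQS hβJ hπ hι hde

theorem exists_nf (hQS : ∀ k, IsMonomialIdeal (J k) ∧ IsPommaretBasis (P k) (J k))
    (hG : IsMarkedSetV d J P gb) (h : κ → MvPolynomial (Fin (n+1)) A) :
    ∃ h', Relation.ReflTransGen (RedStep P gb) h h' ∧ UT J h' = ∅ := by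
  classical
  have wfp : WellFounded (Prod.Lex (lexLt (n := n)) ((· < ·) : ℕ → ℕ → Prop)) :=
    WellFounded.prod_lex lexLt_wf wellFounded_lt
  have main : ∀ p : Exp n × ℕ, ∀ h : κ → MvPolynomial (Fin (n+1)) A,
      (∀ t ∈ UT J h, (decE P t.1 t.2).1 = p.1 ∨ lexLt (decE P t.1 t.2).1 p.1) →
      ((UT J h).filter (fun t => (decE P t.1 t.2).1 = p.1)).card ≤ p.2 →
      ∃ h', Relation.ReflTransGen (RedStep P gb) h h' ∧ UT J h' = ∅ := by
    intro p
    refine wfp.induction (C := fun p => ∀ h : κ → MvPolynomial (Fin (n+1)) A,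
      (∀ t ∈ UT J h, (decE P t.1 t.2).1 = p.1 ∨ lexLt (decE P t.1 t.2).1 p.1) →
      ((UT J h).filter (fun t => (decE P t.1 t.2).1 = p.1)).card ≤ p.2 →
      ∃ h', Relation.ReflTransGen (RedStep P gb) h h' ∧ UT J h' = ∅) p ?_
    clear p
    rintro ⟨μ, m⟩ IH h hbound hcard
    by_cases hUT : UT J h = ∅
    · exact ⟨h, Relation.ReflTransGen.refl, hUT⟩
    · have hne : (UT J h).Nonempty := Finset.nonempty_of_ne_empty hUT
      obtain ⟨t0, ht0, hmax⟩ := exists_lex_max (UT J h) hne (fun t => (decE P t.1 t.2).1)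
      obtain ⟨hsup0, hJ0⟩ := mem_UT.mp ht0
      obtain ⟨h', hstep, hgone, hnew⟩ := step_at hQS hG hsup0 hJ0
      set μ0 := (decE P t0.1 t0.2).1 with hμ0
      have hnew' : ∀ t ∈ UT J h', t ∈ UT J h ∨ lexLt (decE P t.1 t.2).1 μ0 := by
        intro t ht
        obtain ⟨hs', hJ'⟩ := mem_UT.mp ht
        rcases hnew t.1 t.2 hs' hJ' with hold | hlt
        · exact Or.inl (mem_UT.mpr ⟨hold, hJ'⟩)
        · exact Or.inr hlt
      by_cases hmeq : μ0 = μ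
      · -- second component decreases
        have ht0f : t0 ∈ (UT J h).filter (fun t => (decE P t.1 t.2).1 = μ) :=
          Finset.mem_filter.mpr ⟨ht0, hmeq⟩
        have hm1 : 1 ≤ m := le_trans (Finset.card_le_card
          (Finset.singleton_subset_iff.mpr ht0f)) hcard
        have hsub : (UT J h').filter (fun t => (decE P t.1 t.2).1 = μ) ⊆
            ((UT J h).filter (fun t => (decE P t.1 t.2).1 = μ)).erase t0 := by
          intro t ht
          obtain ⟨htU, htd⟩ := Finset.mem_filter.mp ht
          rcases hnew' t htU with hold | hlt
          · refine Finset.mem_erase.mpr ⟨?_, Finset.mem_filter.mpr ⟨hold, htd⟩⟩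
            rintro rfl
            exact hgone (mem_UT.mp htU).1
          · rw [htd, ← hmeq] at hlt
            exact absurd hlt (lexLt_irrefl _)
        have hcard' : ((UT J h').filter (fun t => (decE P t.1 t.2).1 = μ)).card ≤ m - 1 := by
          calc _ ≤ (((UT J h).filter (fun t => (decE P t.1 t.2).1 = μ)).erase t0).card :=
                Finset.card_le_card hsub
            _ = ((UT J h).filter (fun t => (decE P t.1 t.2).1 = μ)).card - 1 :=
                Finset.card_erase_of_mem ht0f
            _ ≤ m - 1 := Nat.sub_le_sub_right hcard 1
        have hlex : Prod.Lex (lexLt (n := n)) ((· < ·) : ℕ → ℕ → Prop) (μ, m - 1) (μ, m) :=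
          Prod.Lex.right _ (by omega)
        have hb' : ∀ t ∈ UT J h', (decE P t.1 t.2).1 = μ ∨ lexLt (decE P t.1 t.2).1 μ := by
          intro t ht
          rcases hnew' t ht with hold | hlt
          · rcases hmax t hold with heq | hlt'
            · exact Or.inl (heq.trans hmeq)
            · exact Or.inr (hmeq ▸ hlt')
          · exact Or.inr (hmeq ▸ hlt)
        obtain ⟨h'', hchain, hempty⟩ := IH (μ, m - 1) hlex h' hb' hcard'
        exact ⟨h'', Relation.ReflTransGen.head hstep hchain, hempty⟩
      · -- first component decreases
        have hltμ : lexLt μ0 μ := by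
          rcases hbound t0 ht0 with heq | hlt
          · exact absurd heq hmeq
          · exact hlt
        have hlex : Prod.Lex (lexLt (n := n)) ((· < ·) : ℕ → ℕ → Prop)
            (μ0, ((UT J h').filter (fun t => (decE P t.1 t.2).1 = μ0)).card) (μ, m) :=
          Prod.Lex.left _ _ hltμ
        have hb' : ∀ t ∈ UT J h', (decE P t.1 t.2).1 = μ0 ∨ lexLt (decE P t.1 t.2).1 μ0 := by
          intro t ht
          rcases hnew' t ht with hold | hlt
          · exact hmax t hold
          · exact Or.inr hlt
        obtain ⟨h'', hchain, hempty⟩ := IH _ hlex h' hb' (le_refl _)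
        exact ⟨h'', Relation.ReflTransGen.head hstep hchain, hempty⟩
  by_cases hUT : UT J h = ∅
  · exact ⟨h, Relation.ReflTransGen.refl, hUT⟩
  · have hne : (UT J h).Nonempty := Finset.nonempty_of_ne_empty hUT
    obtain ⟨t0, ht0, hmax⟩ := exists_lex_max (UT J h) hne (fun t => (decE P t.1 t.2).1)
    exact main ((decE P t0.1 t0.2).1,
      ((UT J h).filter (fun t => (decE P t.1 t.2).1 = (decE P t0.1 t0.2).1)).card) h hmax
      (le_refl _)

end RedAux

section SpanAux

variable {n : ℕ} {κ : Type*} [Fintype κ] [DecidableEq κ] {A : Type*} [CommRing A]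
variable {d : κ → ℤ} {J : κ → Set (Exp n)} {P : κ → Finset (Exp n)}
variable {gb : Exp n → κ → (κ → MvPolynomial (Fin (n+1)) A)}

/-- `A`-span of the multiplicative multiples of elements of `G` with multiplier `<lex μ`. -/
noncomputable def MspB (P : κ → Finset (Exp n))
    (gb : Exp n → κ → (κ → MvPolynomial (Fin (n+1)) A)) (μ : Exp n) :
    Submodule A (κ → MvPolynomial (Fin (n+1)) A) :=
  Submodule.span A {v | ∃ k, ∃ α ∈ P k, ∃ η, multExp α η ∧ lexLt η μ ∧
    v = monomial η (1:A) • gb α k}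

/-- `A`-span of all the multiplicative multiples of elements of `G`. -/
noncomputable def MspAll (P : κ → Finset (Exp n))
    (gb : Exp n → κ → (κ → MvPolynomial (Fin (n+1)) A)) :
    Submodule A (κ → MvPolynomial (Fin (n+1)) A) :=
  Submodule.span A {v | ∃ k, ∃ α ∈ P k, ∃ η, multExp α η ∧
    v = monomial η (1:A) • gb α k}

theorem chain_sub_mem (hQS : ∀ k, IsMonomialIdeal (J k) ∧ IsPommaretBasis (P k) (J k))
    (hG : IsMarkedSetV d J P gb) {μ : Exp n} {h h' : κ → MvPolynomial (Fin (n+1)) A}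
    (hchain : Relation.ReflTransGen (RedStep P gb) h h')
    (hbd : ∀ l γ, γ ∈ (h l).support → γ ∈ J l → lexLt (decE P l γ).1 μ) :
    h - h' ∈ MspB P gb μ := by
  revert hbd
  induction hchain using Relation.ReflTransGen.head_induction_on with
  | refl => intro _; rw [sub_self]; exact Submodule.zero_mem _
  | @head a c step chain ih =>
    intro hbd
    obtain ⟨k, α, hα, η, hη, hc, hcdef⟩ := step
    set v : κ → MvPolynomial (Fin (n+1)) A := monomial η (1:A) • gb α k with hvd
    have hγJ : η + α ∈ J k := cone_mem_J hQS hα hη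
    have hsup : η + α ∈ (a k).support := MvPolynomial.mem_support_iff.mpr hc
    have hdec : decE P k (η + α) = (η, α) := decE_eq hQS hα hη rfl
    have hlt : lexLt η μ := by
      have := hbd k (η + α) hsup hγJ
      rwa [hdec] at this
    have hpiece : (a k).coeff (η + α) • (monomial η (1:A) • gb α k) ∈ MspB P gb μ :=
      Submodule.smul_mem _ _ (Submodule.subset_span ⟨k, α, hα, η, hη, hlt, rfl⟩)
    have hbdc : ∀ l γ, γ ∈ (c l).support → γ ∈ J l → lexLt (decE P l γ).1 μ := by
      intro l γ hγs hγJ'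
      by_cases hold : γ ∈ (a l).support
      · exact hbd l γ hold hγJ'
      · have hv : γ ∈ (v l).support := by
          rw [MvPolynomial.mem_support_iff]
          intro hz
          have h0 : (c l).coeff γ = 0 := by
            rw [hcdef]
            simp only [Pi.sub_apply, Pi.smul_apply, MvPolynomial.coeff_sub,
              MvPolynomial.coeff_smul, hz, smul_eq_mul, mul_zero, sub_zero]
            exact MvPolynomial.notMem_support_iff.mp hold
          exact (MvPolynomial.mem_support_iff.mp hγs) h0
        obtain ⟨β, hβ, rfl⟩ := supp_monSmul hv
        rcases support_gb hG hα l hβ with ⟨rfl, rfl⟩ | ⟨hβJ, -⟩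
        · rw [hdec]; exact hlt
        · obtain ⟨hπ, hι, hde⟩ := decE_spec hQS (P := P) hγJ'
          exact lexLt_trans (multLt hQS hβJ hπ hι hde) hlt
    have hsum : a - h' = ((a k).coeff (η + α) • (monomial η (1:A) • gb α k)) + (c - h') := by
      rw [hcdef]; ring
    rw [hsum]
    exact Submodule.add_mem _ hpiece (ih hbdc)

theorem spanLemma (hQS : ∀ k, IsMonomialIdeal (J k) ∧ IsPommaretBasis (P k) (J k))
    (hG : IsMarkedSetV d J P gb)
    (hred : ∀ k, ∀ α ∈ P k, ∀ i : Fin (n+1), ¬ mult α i →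
      Relation.ReflTransGen (RedStep P gb)
        ((monomial (Finsupp.single i 1) (1:A)) • gb α k) 0)
    (ε : Exp n) : ∀ k, ∀ α ∈ P k, monomial ε (1:A) • gb α k ∈ MspAll P gb := by
  refine lexLt_wf.induction
    (C := fun ε => ∀ k, ∀ α ∈ P k, monomial ε (1:A) • gb α k ∈ MspAll P gb) ε ?_
  clear ε
  intro ε IH k α hα
  by_cases hm : multExp α ε
  · exact Submodule.subset_span ⟨k, α, hα, ε, hm, rfl⟩
  · have hex : ∃ i ∈ ε.support, ¬ mult α i := by
      unfold multExp at hm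
      push_neg at hm
      exact hm
    obtain ⟨j, hjs, hjnm⟩ := hex
    set ε' := ε - Finsupp.single j 1 with hε'
    have hεeq : ε = ε' + Finsupp.single j 1 := by
      ext i
      have hj1 : 1 ≤ ε j := Nat.one_le_iff_ne_zero.mpr (Finsupp.mem_support_iff.mp hjs)
      simp only [hε', Finsupp.add_apply, Finsupp.tsub_apply, Finsupp.single_apply]
      by_cases hij : j = i
      · subst hij; simp; omega
      · simp [hij]
    set h0 : κ → MvPolynomial (Fin (n+1)) A := monomial (Finsupp.single j 1) (1:A) • gb α k
      with hh0
    have hbd : ∀ l γ, γ ∈ (h0 l).support → γ ∈ J l →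
        lexLt (decE P l γ).1 (Finsupp.single j 1) := by
      intro l γ hγs hγJ
      obtain ⟨β, hβ, rfl⟩ := supp_monSmul hγs
      obtain ⟨hπ, hι, hde⟩ := decE_spec hQS (P := P) hγJ
      rcases support_gb hG hα l hβ with ⟨rfl, rfl⟩ | ⟨hβJ, -⟩
      · rcases multLe hQS hα hπ hι hde with heq | hlt
        · exfalso
          have hde2 := hde
          rw [heq] at hde2
          have hbe : β = (decE P l (Finsupp.single j 1 + β)).2 := add_left_cancel hde2
          have hι' := hι
          rw [← hbe, heq] at hι'
          exact hjnm (hι' j (by simp))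
        · exact hlt
      · exact multLt hQS hβJ hπ hι hde
    have hmem : h0 ∈ MspB P gb (Finsupp.single j 1) := by
      have := chain_sub_mem hQS hG (hred k α hα j hjnm) hbd
      rwa [sub_zero] at this
    have hrw : monomial ε (1:A) • gb α k = monomial ε' (1:A) • h0 := by
      rw [hh0, monSmul_monSmul, ← hεeq]
    rw [hrw]
    refine Submodule.span_induction ?_ ?_ ?_ ?_ hmem
    · rintro v ⟨k', α', hα', η, hη, hlt, rfl⟩
      rw [monSmul_monSmul]
      have hlt' : lexLt (ε' + η) ε := by
        rw [hεeq]
        exact lexLt_add_left ε' hlt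
      exact IH (ε' + η) hlt' k' α' hα'
    · rw [smul_zero]; exact Submodule.zero_mem _
    · intro x y _ _ hx hy
      rw [smul_add]; exact Submodule.add_mem _ hx hy
    · intro a x _ hx
      rw [smul_comm]; exact Submodule.smul_mem _ _ hx

theorem poly_smul_decomp (p : MvPolynomial (Fin (n+1)) A) (v : κ → MvPolynomial (Fin (n+1)) A) :
    p • v = ∑ γ ∈ p.support, (p.coeff γ) • (monomial γ (1:A) • v) := by
  funext l
  rw [Finset.sum_apply]
  show p * v l = _
  conv_lhs => rw [p.as_sum]
  rw [Finset.sum_mul]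
  refine Finset.sum_congr rfl fun γ _ => ?_
  rw [Pi.smul_apply, monSmul_apply, MvPolynomial.smul_eq_C_mul, ← mul_assoc,
    MvPolynomial.C_mul_monomial, mul_one]

theorem GmodS_le_MspAll (hQS : ∀ k, IsMonomialIdeal (J k) ∧ IsPommaretBasis (P k) (J k))
    (hG : IsMarkedSetV d J P gb)
    (hred : ∀ k, ∀ α ∈ P k, ∀ i : Fin (n+1), ¬ mult α i →
      Relation.ReflTransGen (RedStep P gb)
        ((monomial (Finsupp.single i 1) (1:A)) • gb α k) 0)
    {x : κ → MvPolynomial (Fin (n+1)) A} (hx : x ∈ GmodS P gb) : x ∈ MspAll P gb := by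
  set N' : Submodule (MvPolynomial (Fin (n+1)) A) (κ → MvPolynomial (Fin (n+1)) A) :=
    { carrier := MspAll P gb
      add_mem' := fun ha hb => Submodule.add_mem _ ha hb
      zero_mem' := Submodule.zero_mem _
      smul_mem' := by
        intro p x hx
        refine Submodule.span_induction ?_ ?_ ?_ ?_ hx
        · rintro v ⟨k', α', hα', η, hη, rfl⟩
          rw [poly_smul_decomp]
          refine Submodule.sum_mem _ fun γ _ => Submodule.smul_mem _ _ ?_
          rw [monSmul_monSmul]
          exact spanLemma hQS hG hred (γ + η) k' α' hα'
        · rw [smul_zero]; exact Submodule.zero_mem _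
        · intro a b _ _ ha hb
          rw [smul_add]; exact Submodule.add_mem _ ha hb
        · intro a y _ hy
          rw [smul_comm]; exact Submodule.smul_mem _ _ hy } with hN'
  have hle : GmodS P gb ≤ N' := by
    rw [GmodS, Submodule.span_le]
    rintro v ⟨k, α, hα, rfl⟩
    show gb α k ∈ MspAll P gb
    exact Submodule.subset_span ⟨k, α, hα, 0, multExp_zero α, by
      rw [MvPolynomial.monomial_zero', MvPolynomial.C_1, one_smul]⟩
  exact hle hx

theorem inf_eq_bot (hQS : ∀ k, IsMonomialIdeal (J k) ∧ IsPommaretBasis (P k) (J k))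
    (hG : IsMarkedSetV d J P gb)
    (hred : ∀ k, ∀ α ∈ P k, ∀ i : Fin (n+1), ¬ mult α i →
      Relation.ReflTransGen (RedStep P gb)
        ((monomial (Finsupp.single i 1) (1:A)) • gb α k) 0)
    (s : ℤ) : GmodDeg d P gb s ⊓ Submodule.span A (NUTermsDeg A d J s) = ⊥ := by
  rw [eq_bot_iff]
  rintro h ⟨⟨hGS, -⟩, hN⟩
  rw [Submodule.mem_bot]
  have hsupp := spanN_supp hN
  have hM : h ∈ MspAll P gb := GmodS_le_MspAll hQS hG hred hGS
  obtain ⟨c, hcsupp, hsum⟩ := Submodule.mem_span_set.mp hM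
  have hcempty : c.support = ∅ := by
    by_contra hne
    have hne' : c.support.Nonempty := Finset.nonempty_of_ne_empty hne
    have hsel : ∀ v ∈ c.support, ∃ q : κ × Exp n × Exp n, q.2.1 ∈ P q.1 ∧
        multExp q.2.1 q.2.2 ∧ v = monomial q.2.2 (1:A) • gb q.2.1 q.1 := by
      intro v hv
      obtain ⟨k, α, hα, η, hη, hveq⟩ := hcsupp hv
      exact ⟨(k, α, η), hα, hη, hveq⟩
    choose q hq1 hq2 hq3 using hsel
    have hatt : (c.support.attach).Nonempty := Finset.attach_nonempty_iff.mpr hne'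
    obtain ⟨vs, -, hmax⟩ := exists_lex_max c.support.attach hatt
      (fun v => (q v.1 v.2).2.2)
    set ks := (q vs.1 vs.2).1 with hks
    set αs := (q vs.1 vs.2).2.1 with hαs
    set ηs := (q vs.1 vs.2).2.2 with hηs
    set γs := ηs + αs with hγs
    have hγJ : γs ∈ J ks := cone_mem_J hQS (hq1 vs.1 vs.2) (hq2 vs.1 vs.2)
    -- coefficient of h at (ks, γs)
    have hcoeff : (h ks).coeff γs = c vs.1 := by
      rw [← hsum]
      have h1 : ((c.sum fun mi r => r • mi) ks) = ∑ v ∈ c.support, c v • (v ks) := by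
        rw [Finsupp.sum, Finset.sum_apply]
        exact Finset.sum_congr rfl fun v _ => rfl
      rw [h1, MvPolynomial.coeff_sum]
      rw [Finset.sum_eq_single vs.1]
      · rw [MvPolynomial.coeff_smul, hq3 vs.1 vs.2, coeff_monSmul,
          if_pos le_self_add, hγs, add_tsub_cancel_left,
          gb_coeff_J hG (hq1 vs.1 vs.2) (mem_J_of_mem_P hQS (hq1 vs.1 vs.2)),
          if_pos ⟨rfl, rfl⟩, smul_eq_mul, mul_one]
      · intro v hv hvne
        rw [MvPolynomial.coeff_smul, smul_eq_mul]
        have hz : (v ks).coeff γs = 0 := by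
          by_contra hnz
          rw [hq3 v hv, coeff_monSmul] at hnz
          by_cases hle : (q v hv).2.2 ≤ γs
          · rw [if_pos hle] at hnz
            have hβs : γs - (q v hv).2.2 ∈ (gb (q v hv).2.1 (q v hv).1 ks).support :=
              MvPolynomial.mem_support_iff.mpr hnz
            have hγeq : γs = (q v hv).2.2 + (γs - (q v hv).2.2) := by
              rw [add_comm, tsub_add_cancel_of_le hle]
            rcases support_gb hG (hq1 v hv) ks hβs with ⟨hkk, hββ⟩ | ⟨hβJ, -⟩
            · -- head case: the two canonical decompositions coincide, so v = vs
              have he : (q v hv).2.2 + (q v hv).2.1 = ηs + αs := by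
                rw [← hββ, ← hγeq]
              have hke : (q v hv).1 = ks := hkk.symm
              have hq1' := hq1 v hv
              rw [hke] at hq1'
              have huni := dec_unique hQS hq1' (hq1 vs.1 vs.2)
                (hq2 v hv) (hq2 vs.1 vs.2) he
              apply hvne
              rw [hq3 v hv, hq3 vs.1 vs.2, huni.2, huni.1, hke]
            · -- tail case: contradiction with maximality
              have he : (q v hv).2.2 + (γs - (q v hv).2.2) = ηs + αs := hγeq.symm
              have hlt : lexLt ηs (q v hv).2.2 :=
                multLt hQS hβJ (hq1 vs.1 vs.2) (hq2 vs.1 vs.2) he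
              rcases hmax ⟨v, hv⟩ (Finset.mem_attach _ _) with heq | hlt'
              · rw [heq] at hlt
                exact lexLt_irrefl _ hlt
              · exact lexLt_irrefl _ (lexLt_trans hlt hlt')
          · rw [if_neg hle] at hnz
            exact hnz rfl
        rw [hz, mul_zero]
      · intro hvs
        exact absurd vs.2 hvs
    have hzero : (h ks).coeff γs = 0 := by
      by_contra hnz
      exact hsupp ks γs (MvPolynomial.mem_support_iff.mpr hnz) hγJ
    rw [hcoeff] at hzero
    exact Finsupp.mem_support_iff.mp vs.2 hzero
  have : c = 0 := Finsupp.support_eq_empty.mp hcempty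
  rw [← hsum, this, Finsupp.sum_zero_index]

end SpanAux

/-- Theorem `algoMBasis`: `G` is a `P(U)`-marked basis iff for every
`f_α^k ∈ G` and every nonmultiplicative variable `x_i` of `x^α`, the product `x_i f_α^k`
reduces to `0` under `→_G`. -/
theorem statement12 {n : ℕ} {κ : Type*} [Fintype κ] [DecidableEq κ] (hm : Nonempty κ)
    {A : Type*} [CommRing A] [IsNoetherianRing A]
    (d : κ → ℤ) (J : κ → Set (Exp n)) (P : κ → Finset (Exp n))
    (hQS : ∀ k, IsMonomialIdeal (J k) ∧ IsPommaretBasis (P k) (J k))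
    (gb : Exp n → κ → (κ → MvPolynomial (Fin (n+1)) A))
    (hG : IsMarkedSetV d J P gb) :
    MarkedBasisProp d J P gb ↔
      ∀ k, ∀ α ∈ P k, ∀ i : Fin (n+1), ¬ mult α i →
        Relation.ReflTransGen (RedStep P gb)
          ((monomial (Finsupp.single i 1) (1:A)) • gb α k) 0 := by
  constructor
  · intro hMBP k α hα i hi
    set h : κ → MvPolynomial (Fin (n+1)) A := monomial (Finsupp.single i 1) (1:A) • gb α k
      with hh
    obtain ⟨h', hchain, hempty⟩ := exists_nf hQS hG h
    set s : ℤ := (degE (Finsupp.single i 1) : ℤ) + ((degE α : ℤ) + d k) with hs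
    have hhom : IsHomogV d h s := monSmul_homog (gb_homog hG hα)
    have hhom' : IsHomogV d h' s := rtg_homog hG hchain hhom
    have hGS : h ∈ (GmodS P gb).restrictScalars A :=
      (Submodule.restrictScalars_mem _ _ _).mpr
        (Submodule.smul_mem (GmodS P gb) _ (gb_mem_GmodS hα))
    have hGS' : h' ∈ (GmodS P gb).restrictScalars A := by
      have h2 := rtg_sub_mem hchain
      have h3 : h' = h - (h - h') := (sub_sub_cancel h h').symm
      rw [h3]
      exact Submodule.sub_mem _ hGS h2
    have hN : h' ∈ Submodule.span A (NUTermsDeg A d J s) := by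
      refine mem_spanN hhom' ?_
      intro k' γ hγ hJγ
      have hm : (k', γ) ∈ UT J h' := mem_UT.mpr ⟨hγ, hJγ⟩
      rw [hempty] at hm
      exact absurd hm (Finset.notMem_empty _)
    have hmem : h' ∈ GmodDeg d P gb s ⊓ Submodule.span A (NUTermsDeg A d J s) :=
      ⟨⟨hGS', hhom'⟩, hN⟩
    rw [(hMBP s).2] at hmem
    have h0 : h' = 0 := (Submodule.mem_bot A).mp hmem
    exact h0 ▸ hchain
  · intro hred s
    exact ⟨homog_eq_sup hQS hG s, inf_eq_bot hQS hG hred s⟩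

end MB
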